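/- Let T ∈ {1,…,n} and Z = (Z₁,…,Zₙ) be jointly distributed with E[Zᵢ] = 0, ‖Zᵢ‖_p ≤ σ for all i, p > 1, and 1/p + 1/q = 1. Then E[Z_T] ≤ σ · n^{1/p} · inf_{a₁,…,aₙ∈ℝ} (Σᵢ P_T(i)|1 − aᵢ|^q + (1 − P_T(i))|aᵢ|^q)^{1/q}. -/

import Mathlib

open MeasureTheory Set ENNReal

/-- Intermediate marginal bound: if `E[Zᵢ] = 0`, `‖Zᵢ‖_p ≤ σ`, `p > 1`,
`1/p + 1/q = 1`, then
`E[Z_T] ≤ σ n^{1/p} inf_{a₁,…,aₙ} (Σᵢ P_T(i)|1-aᵢ|^q + (1-P_T(i))|aᵢ|^q)^{1/q}`. -/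
theorem stmt19 {Ω : Type*} [MeasurableSpace Ω] (μ : Measure Ω) [IsProbabilityMeasure μ]
    (n : ℕ) (Z : Fin n → Ω → ℝ) (T : Ω → Fin n) (hT : Measurable T)
    (hZm : ∀ i, Measurable (Z i)) (hZint : ∀ i, Integrable (Z i) μ)
    (hmean : ∀ i, ∫ ω, Z i ω ∂μ = 0)
    (p q : ℝ) (hp : 1 < p) (hpq : 1 / p + 1 / q = 1)
    (σ : ℝ) (hσ : 0 < σ)
    (hnorm : ∀ i, eLpNorm (Z i) (ENNReal.ofReal p) μ ≤ ENNReal.ofReal σ) :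
    ∫ ω, Z (T ω) ω ∂μ ≤
      σ * (n : ℝ) ^ (1 / p) *
        ⨅ a : Fin n → ℝ,
          (∑ i : Fin n,
            ((μ {ω | T ω = i}).toReal * |1 - a i| ^ q +
              (1 - (μ {ω | T ω = i}).toReal) * |a i| ^ q)) ^ (1 / q) := by
  have hpq' : p.HolderConjugate q := Real.holderConjugate_iff.mpr ⟨hp, by simpa [one_div] using hpq⟩
  have hq1 : 1 < q := hpq'.symm.lt
  have hq0 : 0 < q := hpq'.symm.pos
  have hp0 : 0 < p := hpq'.pos
  have hA : ∀ i : Fin n, MeasurableSet {ω | T ω = i} := fun i =>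
    hT (measurableSet_singleton i)
  have hP1 : ∀ i : Fin n, (μ {ω | T ω = i}).toReal ≤ 1 := fun i => by
    simpa using ENNReal.toReal_mono one_ne_top (prob_le_one (μ := μ) (s := {ω | T ω = i}))
  rw [Real.mul_iInf_of_nonneg (by positivity)]
  refine le_ciInf fun a => ?_
  -- the functions g i
  set g : Fin n → Ω → ℝ := fun i ω => Set.indicator {ω | T ω = i} (fun _ => (1:ℝ)) ω - a i
    with hg
  have hgm : ∀ i, Measurable (g i) := fun i =>
    (measurable_const.indicator (hA i)).sub measurable_const
  have hgbd : ∀ i ω, ‖g i ω‖ ≤ 1 + |a i| := by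
    intro i ω
    simp only [hg, Real.norm_eq_abs]
    refine (abs_sub _ _).trans ?_
    gcongr
    by_cases h : ω ∈ {ω | T ω = i} <;> simp [h]
  have hgmem : ∀ i, MemLp (g i) (ENNReal.ofReal q) μ := fun i =>
    MemLp.of_bound (hgm i).aestronglyMeasurable (1 + |a i|) (ae_of_all _ (hgbd i))
  have hZmem : ∀ i, MemLp (Z i) (ENNReal.ofReal p) μ := fun i =>
    ⟨(hZm i).aestronglyMeasurable, lt_of_le_of_lt (hnorm i) ofReal_lt_top⟩
  -- abbreviation for the terms
  set t : Fin n → ℝ := fun i =>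
    (μ {ω | T ω = i}).toReal * |1 - a i| ^ q + (1 - (μ {ω | T ω = i}).toReal) * |a i| ^ q
    with ht
  have ht0 : ∀ i, 0 ≤ t i := fun i => by
    have := hP1 i
    have : (0:ℝ) ≤ 1 - (μ {ω | T ω = i}).toReal := by linarith
    positivity
  -- Step 1: rewrite the integral as a sum
  have step1 : ∫ ω, Z (T ω) ω ∂μ = ∑ i : Fin n, ∫ ω, Z i ω * g i ω ∂μ := by
    have hint : ∀ i : Fin n, Integrable (fun ω => Set.indicator {ω | T ω = i} (Z i) ω) μ :=
      fun i => (hZint i).indicator (hA i)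
    have e1 : ∀ i : Fin n, ∫ ω, Z i ω * g i ω ∂μ =
        ∫ ω, Set.indicator {ω | T ω = i} (Z i) ω ∂μ := by
      intro i
      have : (fun ω => Z i ω * g i ω) =
          fun ω => Set.indicator {ω | T ω = i} (Z i) ω - a i * Z i ω := by
        funext ω
        by_cases h : ω ∈ {ω | T ω = i} <;> simp [hg, h] <;> ring
      rw [this, integral_sub (hint i) ((hZint i).const_mul _), integral_const_mul, hmean i]
      simp
    have e2 : (fun ω => Z (T ω) ω) =
        fun ω => ∑ i : Fin n, Set.indicator {ω | T ω = i} (Z i) ω := by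
      funext ω
      rw [Finset.sum_eq_single (T ω)]
      · simp
      · intro b _ hb
        apply Set.indicator_of_notMem
        simp only [Set.mem_setOf_eq]
        exact fun h => hb h.symm
      · simp
    simp_rw [e1]
    rw [e2, integral_finset_sum _ (fun i _ => hint i)]
  -- Step 2: Hölder for each term
  have step2 : ∀ i : Fin n, ∫ ω, Z i ω * g i ω ∂μ ≤ σ * t i ^ (1 / q) := by
    intro i
    have h1 : ∫ ω, Z i ω * g i ω ∂μ ≤ ∫ ω, ‖Z i ω‖ * ‖g i ω‖ ∂μ := by
      calc ∫ ω, Z i ω * g i ω ∂μ ≤ ‖∫ ω, Z i ω * g i ω ∂μ‖ := le_abs_self _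
        _ ≤ ∫ ω, ‖Z i ω * g i ω‖ ∂μ := norm_integral_le_integral_norm _
        _ = ∫ ω, ‖Z i ω‖ * ‖g i ω‖ ∂μ := by simp_rw [norm_mul]
    have h2 := integral_mul_norm_le_Lp_mul_Lq hpq' (hZmem i) (hgmem i)
    have hZn : (∫ ω, ‖Z i ω‖ ^ p ∂μ) ^ (1 / p) ≤ σ := by
      have heq := (hZmem i).eLpNorm_eq_integral_rpow_norm (by simp [hp0]) ofReal_ne_top
      rw [ENNReal.toReal_ofReal hp0.le] at heq
      have h3 := hnorm i
      rw [heq, ENNReal.ofReal_le_ofReal_iff hσ.le] at h3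
      simpa [one_div] using h3
    have hgq : ∫ ω, ‖g i ω‖ ^ q ∂μ = t i := by
      have e : (fun ω => ‖g i ω‖ ^ q) =
          fun ω => Set.indicator {ω | T ω = i} (fun _ => |1 - a i| ^ q) ω +
            Set.indicator {ω | T ω = i}ᶜ (fun _ => |a i| ^ q) ω := by
        funext ω
        by_cases h : ω ∈ {ω | T ω = i}
        · simp [hg, h, Real.norm_eq_abs]
        · simp [hg, h, Real.norm_eq_abs, abs_neg]
      rw [e, integral_add ((integrable_const _).indicator (hA i))
          ((integrable_const _).indicator (hA i).compl),
        integral_indicator_const _ (hA i), integral_indicator_const _ (hA i).compl,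
        probReal_compl_eq_one_sub (hA i), ht]
      simp only [measureReal_def]
      simp [smul_eq_mul, mul_comm]
    calc ∫ ω, Z i ω * g i ω ∂μ ≤ ∫ ω, ‖Z i ω‖ * ‖g i ω‖ ∂μ := h1
      _ ≤ (∫ ω, ‖Z i ω‖ ^ p ∂μ) ^ (1 / p) * (∫ ω, ‖g i ω‖ ^ q ∂μ) ^ (1 / q) := h2
      _ ≤ σ * t i ^ (1 / q) := by
          rw [hgq]
          have : (0:ℝ) ≤ t i ^ (1 / q) := Real.rpow_nonneg (ht0 i) _
          exact mul_le_mul_of_nonneg_right hZn this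
  -- Step 3: sum up and apply finite Hölder
  have step3 : ∑ i : Fin n, t i ^ (1 / q) ≤ (n : ℝ) ^ (1 / p) * (∑ i : Fin n, t i) ^ (1 / q) := by
    have hsum0 : (0:ℝ) ≤ ∑ i : Fin n, t i := Finset.sum_nonneg fun i _ => ht0 i
    have key : (∑ i : Fin n, t i ^ (1 / q)) ^ q ≤ (n : ℝ) ^ (q - 1) * ∑ i : Fin n, t i := by
      have := Real.rpow_sum_le_const_mul_sum_rpow (Finset.univ : Finset (Fin n))
        (fun i => t i ^ (1 / q)) hq1.le
      simp only [Finset.card_univ, Fintype.card_fin] at this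
      calc (∑ i : Fin n, t i ^ (1 / q)) ^ q
          = (∑ i : Fin n, |t i ^ (1 / q)|) ^ q := by
            congr 1; refine Finset.sum_congr rfl fun i _ => ?_
            rw [abs_of_nonneg (Real.rpow_nonneg (ht0 i) _)]
        _ ≤ (n : ℝ) ^ (q - 1) * ∑ i : Fin n, |t i ^ (1 / q)| ^ q := this
        _ = (n : ℝ) ^ (q - 1) * ∑ i : Fin n, t i := by
            congr 1; refine Finset.sum_congr rfl fun i _ => ?_
            rw [abs_of_nonneg (Real.rpow_nonneg (ht0 i) _),
              ← Real.rpow_mul (ht0 i), one_div_mul_cancel hq0.ne', Real.rpow_one]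
    have hs0 : (0:ℝ) ≤ ∑ i : Fin n, t i ^ (1 / q) :=
      Finset.sum_nonneg fun i _ => Real.rpow_nonneg (ht0 i) _
    have hqp : (q - 1) * (1 / q) = 1 / p := by
      have h := hpq
      field_simp at h ⊢
      nlinarith [h]
    calc ∑ i : Fin n, t i ^ (1 / q)
        = ((∑ i : Fin n, t i ^ (1 / q)) ^ q) ^ (1 / q) := by
          rw [← Real.rpow_mul hs0, mul_one_div_cancel hq0.ne', Real.rpow_one]
      _ ≤ ((n : ℝ) ^ (q - 1) * ∑ i : Fin n, t i) ^ (1 / q) :=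
          Real.rpow_le_rpow (by positivity) key (by positivity)
      _ = (n : ℝ) ^ (1 / p) * (∑ i : Fin n, t i) ^ (1 / q) := by
          rw [Real.mul_rpow (by positivity) hsum0, ← Real.rpow_mul (Nat.cast_nonneg n), hqp]
  calc ∫ ω, Z (T ω) ω ∂μ = ∑ i : Fin n, ∫ ω, Z i ω * g i ω ∂μ := step1
    _ ≤ ∑ i : Fin n, σ * t i ^ (1 / q) := Finset.sum_le_sum fun i _ => step2 i
    _ = σ * ∑ i : Fin n, t i ^ (1 / q) := by rw [Finset.mul_sum]
    _ ≤ σ * ((n : ℝ) ^ (1 / p) * (∑ i : Fin n, t i) ^ (1 / q)) :=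
        mul_le_mul_of_nonneg_left step3 hσ.le
    _ = σ * (n : ℝ) ^ (1 / p) * (∑ i : Fin n, t i) ^ (1 / q) := by ring
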